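/- Let P(s) = diag(p₁(s),…,pₙ(s)) where each p_i(s) is a complex number, and let L = Q X Q* with Q ∈ ℂ^{n×m}, Q*Q = I_m, and X an m×m Hermitian matrix with εI ⪯ X ⪯ I for some ε > 0. Then every eigenvalue of Q* P Q X lies in the convex hull of the set {k·p_i : 1 ≤ i ≤ n, ε ≤ k ≤ 1}. -/

import Mathlib

open Matrix
open scoped ComplexOrder

theorem stmt_7 {n m : ℕ} (p : Fin n → ℂ)
    (Q : Matrix (Fin n) (Fin m) ℂ) (hQ : Qᴴ * Q = 1)
    (X : Matrix (Fin m) (Fin m) ℂ) (hX : X.IsHermitian)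
    (ε : ℝ) (hε : 0 < ε)
    (hXlow : (X - (ε : ℂ) • (1 : Matrix (Fin m) (Fin m) ℂ)).PosSemidef)
    (hXup : ((1 : Matrix (Fin m) (Fin m) ℂ) - X).PosSemidef) :
    ∀ μ ∈ spectrum ℂ (Qᴴ * Matrix.diagonal p * Q * X),
      μ ∈ convexHull ℝ {z : ℂ | ∃ (i : Fin n) (k : ℝ), ε ≤ k ∧ k ≤ 1 ∧ z = (k : ℂ) * p i} := by
  classical
  intro μ hμ
  obtain ⟨A, hAdef⟩ : ∃ A, A = Qᴴ * Matrix.diagonal p * Q := ⟨_, rfl⟩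
  rw [show Qᴴ * Matrix.diagonal p * Q * X = A * X by rw [hAdef]] at hμ
  -- X is positive definite
  have hεI : ((ε:ℂ) • (1 : Matrix (Fin m) (Fin m) ℂ)).PosDef := by
    have : ((ε:ℂ) • (1 : Matrix (Fin m) (Fin m) ℂ)) = Matrix.diagonal (fun _ => (ε:ℂ)) := by
      ext i j
      by_cases h : i = j <;> simp [Matrix.one_apply, Matrix.diagonal_apply, h]
    rw [this]
    exact Matrix.posDef_diagonal_iff.mpr (fun _ => by exact_mod_cast hε)
  have hXpd : X.PosDef := by
    have := Matrix.PosDef.posSemidef_add hXlow hεI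
    rwa [sub_add_cancel] at this
  obtain ⟨Y, hYdef⟩ : ∃ Y : Matrix (Fin m) (Fin m) ℂ, Y = (open MatrixOrder in CFC.sqrt X) := ⟨_, rfl⟩
  have hYps : Y.PosSemidef := hYdef ▸ (open MatrixOrder in (CFC.sqrt_nonneg X).posSemidef)
  have hYH : Yᴴ = Y := hYps.isHermitian
  have hYY : Y * Y = X := hYdef ▸ (open MatrixOrder in CFC.sqrt_mul_sqrt_self X hXpd.posSemidef.nonneg)
  have hcomm : X * Y = Y * X := by rw [← hYY, Matrix.mul_assoc]
  -- obtain an eigenvector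
  obtain ⟨v, hv0, hv⟩ : ∃ v, v ≠ 0 ∧ (A * X) *ᵥ v = μ • v := by
    rw [spectrum.mem_iff] at hμ
    rw [Matrix.isUnit_iff_isUnit_det, isUnit_iff_ne_zero, not_not,
      ← Matrix.exists_mulVec_eq_zero_iff] at hμ
    obtain ⟨v, hv0, hv⟩ := hμ
    refine ⟨v, hv0, ?_⟩
    have halg : (algebraMap ℂ (Matrix (Fin m) (Fin m) ℂ) μ) = μ • 1 := by
      simp [Algebra.algebraMap_eq_smul_one]
    rw [Matrix.sub_mulVec, halg, Matrix.smul_mulVec, Matrix.one_mulVec,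
      sub_eq_zero] at hv
    exact hv.symm
  -- u = Y v is an eigenvector of Y A Y
  obtain ⟨u, hudef⟩ : ∃ u, u = Y *ᵥ v := ⟨_, rfl⟩
  have hu0 : u ≠ 0 := by
    intro h
    apply hv0
    have hZ : (X⁻¹ * Y) * Y = 1 := by
      rw [Matrix.mul_assoc, hYY, Matrix.nonsing_inv_mul _ (isUnit_iff_ne_zero.mpr hXpd.det_pos.ne')]
    calc v = ((X⁻¹ * Y) * Y) *ᵥ v := by rw [hZ, Matrix.one_mulVec]
      _ = (X⁻¹ * Y) *ᵥ u := by rw [← Matrix.mulVec_mulVec, ← hudef]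
      _ = 0 := by rw [h, Matrix.mulVec_zero]
  have heig : (Y * A * Y) *ᵥ u = μ • u := by
    rw [hudef]
    calc (Y * A * Y) *ᵥ (Y *ᵥ v) = ((Y * A * Y) * Y) *ᵥ v := Matrix.mulVec_mulVec ..
      _ = (Y * (A * X)) *ᵥ v := by rw [Matrix.mul_assoc, Matrix.mul_assoc, hYY]
      _ = Y *ᵥ ((A * X) *ᵥ v) := (Matrix.mulVec_mulVec ..).symm
      _ = Y *ᵥ (μ • v) := by rw [hv]
      _ = μ • (Y *ᵥ v) := by rw [Matrix.mulVec_smul]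
  -- transfer dot products across hermitian Y and across Q
  have keyY : ∀ a b : Fin m → ℂ, star a ⬝ᵥ (Y *ᵥ b) = star (Y *ᵥ a) ⬝ᵥ b := by
    intro a b
    rw [Matrix.star_mulVec, hYH, Matrix.dotProduct_mulVec]
  have keyQ : ∀ (a : Fin m → ℂ) (b : Fin n → ℂ),
      star a ⬝ᵥ (Qᴴ *ᵥ b) = star (Q *ᵥ a) ⬝ᵥ b := by
    intro a b
    rw [Matrix.star_mulVec, Matrix.dotProduct_mulVec]
  obtain ⟨t, htdef⟩ : ∃ t, t = Y *ᵥ u := ⟨_, rfl⟩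
  obtain ⟨w, hwdef⟩ : ∃ w, w = Q *ᵥ t := ⟨_, rfl⟩
  obtain ⟨c, hcdef⟩ : ∃ c : Fin n → ℝ, c = fun i => Complex.normSq (w i) := ⟨_, rfl⟩
  obtain ⟨N, hNdef⟩ : ∃ N : ℝ, N = ∑ i, Complex.normSq (u i) := ⟨_, rfl⟩
  obtain ⟨S, hSdef⟩ : ∃ S : ℝ, S = ∑ i, c i := ⟨_, rfl⟩
  have hNu : star u ⬝ᵥ u = (N : ℂ) := by
    simp [dotProduct, hNdef, Complex.normSq_eq_conj_mul_self]
  have hSw : star w ⬝ᵥ w = (S : ℂ) := by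
    simp [dotProduct, hSdef, hcdef, Complex.normSq_eq_conj_mul_self]
  have hXu : X *ᵥ u = Y *ᵥ t := by
    rw [htdef, hudef, Matrix.mulVec_mulVec, Matrix.mulVec_mulVec, Matrix.mulVec_mulVec,
      hYY]
  -- the eigenvalue equation in quadratic-form terms
  have hquad : μ * (N : ℂ) = ∑ i, p i * (c i : ℂ) := by
    have h1 : star u ⬝ᵥ ((Y * A * Y) *ᵥ u) = μ * (N : ℂ) := by
      rw [heig, dotProduct_smul, hNu, smul_eq_mul]
    have h2 : star u ⬝ᵥ ((Y * A * Y) *ᵥ u) = ∑ i, p i * (c i : ℂ) := by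
      have e1 : (Y * A * Y) *ᵥ u = Y *ᵥ (A *ᵥ t) := by
        rw [htdef, Matrix.mulVec_mulVec, Matrix.mulVec_mulVec]
      rw [e1, keyY, ← htdef]
      have e2 : A *ᵥ t = Qᴴ *ᵥ (Matrix.diagonal p *ᵥ w) := by
        rw [hwdef, Matrix.mulVec_mulVec, Matrix.mulVec_mulVec, hAdef, Matrix.mul_assoc]
      rw [e2, keyQ, ← hwdef, dotProduct]
      refine Finset.sum_congr rfl fun i _ => ?_
      have hd : (Matrix.diagonal p *ᵥ w) i = p i * w i := Matrix.mulVec_diagonal ..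
      rw [hd, hcdef]
      simp only [Pi.star_apply, Complex.normSq_eq_conj_mul_self, Complex.star_def]
      ring
    rw [← h1, h2]
  -- S = u* X u
  have hSX : star u ⬝ᵥ (X *ᵥ u) = (S : ℂ) := by
    rw [← hSw, hwdef]
    have h3 : star (Q *ᵥ t) ⬝ᵥ (Q *ᵥ t) = star t ⬝ᵥ t := by
      rw [← keyQ, Matrix.mulVec_mulVec, hQ, Matrix.one_mulVec]
    rw [h3, hXu, keyY, ← htdef]
  -- inequalities
  have hεNS : ε * N ≤ S := by
    have h0 := hXlow.dotProduct_mulVec_nonneg u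
    rw [Matrix.sub_mulVec, dotProduct_sub, Matrix.smul_mulVec,
      Matrix.one_mulVec, dotProduct_smul, hSX, hNu, smul_eq_mul] at h0
    have hc : ((S - ε * N : ℝ) : ℂ) = (S : ℂ) - (ε : ℂ) * (N : ℂ) := by push_cast; ring
    rw [← hc] at h0
    have := Complex.zero_le_real.mp h0
    linarith
  have hSN : S ≤ N := by
    have h0 := hXup.dotProduct_mulVec_nonneg u
    rw [Matrix.sub_mulVec, dotProduct_sub, Matrix.one_mulVec, hSX, hNu] at h0
    have hc : ((N - S : ℝ) : ℂ) = (N : ℂ) - (S : ℂ) := by push_cast; ring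
    rw [← hc] at h0
    have := Complex.zero_le_real.mp h0
    linarith
  have hN0 : 0 < N := by
    obtain ⟨i, hi⟩ := Function.ne_iff.mp hu0
    rw [hNdef]
    exact Finset.sum_pos' (fun j _ => Complex.normSq_nonneg _)
      ⟨i, Finset.mem_univ i, by simpa [Complex.normSq_pos] using hi⟩
  have hS0 : 0 < S := lt_of_lt_of_le (by positivity) hεNS
  obtain ⟨k, hkdef⟩ : ∃ k : ℝ, k = S / N := ⟨_, rfl⟩
  have hk1 : ε ≤ k := hkdef ▸ (le_div_iff₀ hN0).mpr hεNS
  have hk2 : k ≤ 1 := hkdef ▸ (div_le_one hN0).mpr hSN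
  -- conclude via centerMass
  have hmem : Finset.univ.centerMass c (fun i => (k : ℂ) * p i) ∈
      convexHull ℝ {z : ℂ | ∃ (i : Fin n) (k : ℝ), ε ≤ k ∧ k ≤ 1 ∧ z = (k : ℂ) * p i} := by
    refine Finset.centerMass_mem_convexHull _ (fun i _ => by rw [hcdef]; exact Complex.normSq_nonneg _) ?_
      (fun i _ => ⟨i, k, hk1, hk2, rfl⟩)
    rw [← hSdef]; exact hS0
  have hcalc : Finset.univ.centerMass c (fun i => (k : ℂ) * p i) = μ := by
    rw [Finset.centerMass]
    have hsum : ∑ i, c i • ((k : ℂ) * p i) = (k : ℂ) * (μ * (N : ℂ)) := by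
      rw [hquad, Finset.mul_sum]
      refine Finset.sum_congr rfl fun i _ => ?_
      rw [Complex.real_smul]
      ring
    rw [hsum, ← hSdef, Complex.real_smul]
    have hNne : (N : ℝ) ≠ 0 := hN0.ne'
    have hSne : (S : ℝ) ≠ 0 := hS0.ne'
    have hc : ((S⁻¹ : ℝ) : ℂ) * ((k : ℂ) * (μ * (N : ℂ))) = ((S⁻¹ * k * N : ℝ) : ℂ) * μ := by
      push_cast; ring
    rw [hc, show (S⁻¹ * k * N : ℝ) = 1 by rw [hkdef]; field_simp, Complex.ofReal_one, one_mul]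
  rwa [hcalc] at hmem
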